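/- Let Δ be a countable group acting by homeomorphisms on a nonempty connected topological manifold Ṽ such that the set Ṽ₀ of points of Ṽ with trivial stabilizer is open, connected and dense in Ṽ. Let Ũ be a topological space, let f̃ : Ũ → Ṽ be a homeomorphism, and let f̄ : Ũ → Ṽ be a continuous map such that for every u ∈ Ũ there exists δ ∈ Δ with f̄(u) = δ • f̃(u). Then there exists a unique element δ ∈ Δ such that f̄(u) = δ • f̃(u) for all u ∈ Ũ. (This is the 'orange lemma': any two lifts of a diffeomorphism of models differ by a unique element of the acting group.) -/

import Mathlib

open Set Filter Metric Topology

/-- A countable family of closed sets that covers `ℝ`, such that the index is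
determined by any point, has a constant index function (Sierpiński-type lemma). -/
private lemma closed_partition_real_const {ι : Type*} [Countable ι] {F : ι → Set ℝ}
    (hclosed : ∀ i, IsClosed (F i))
    (huniq : ∀ (t : ℝ) (k l : ι), t ∈ F k → t ∈ F l → k = l)
    (hcover : ∀ t : ℝ, ∃ i, t ∈ F i) {x y : ℝ} {i j : ι}
    (hx : x ∈ F i) (hy : y ∈ F j) : i = j := by
  classical
  set K : Set ℝ := (⋃ k, interior (F k))ᶜ with hKdef
  have hK : K = (∅ : Set ℝ) := by
    by_contra hne
    obtain ⟨t, ht⟩ := nonempty_iff_ne_empty.mpr hne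
    have hKclosed : IsClosed K := (isOpen_iUnion fun k => isOpen_interior).isClosed_compl
    haveI : Nonempty K := ⟨⟨t, ht⟩⟩
    haveI := hKclosed.completeSpace_coe
    have hGclosed : ∀ k, IsClosed ((Subtype.val : K → ℝ) ⁻¹' F k) := fun k =>
      (hclosed k).preimage continuous_subtype_val
    have hGcover : ⋃ k, ((Subtype.val : K → ℝ) ⁻¹' F k) = univ := by
      ext s; simp only [mem_iUnion, mem_univ, iff_true, mem_preimage]; exact hcover s
    obtain ⟨i₀, ⟨t₀K, ht₀K⟩⟩ := nonempty_interior_of_iUnion_of_closed hGclosed hGcover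
    obtain ⟨ε, hε, hεball⟩ := Metric.mem_nhds_iff.mp (mem_interior_iff_mem_nhds.mp ht₀K)
    set t₀ : ℝ := (t₀K : ℝ) with ht₀def
    have hball : ∀ s : ℝ, s ∈ K → dist s t₀ < ε → s ∈ F i₀ := by
      intro s hs hd
      exact hεball (show (⟨s, hs⟩ : K) ∈ Metric.ball t₀K ε by
        simpa [Metric.mem_ball, Subtype.dist_eq] using hd)
    have ht₀K' : t₀ ∈ K := t₀K.2
    have ht₀F : t₀ ∈ F i₀ := hball t₀ t₀K.2 (by simp [hε])
    have ht₀int : t₀ ∉ interior (F i₀) := by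
      intro h
      exact ht₀K' (mem_iUnion.mpr ⟨i₀, h⟩)
    have hex : ∃ s : ℝ, dist s t₀ < ε ∧ s ∉ F i₀ := by
      by_contra h
      push_neg at h
      exact ht₀int (mem_interior_iff_mem_nhds.mpr
        (Metric.mem_nhds_iff.mpr ⟨ε, hε, fun s hs => h s hs⟩))
    obtain ⟨s, hsd, hsF⟩ := hex
    obtain ⟨j₀, hj₀⟩ := hcover s
    have hji : j₀ ≠ i₀ := fun h => hsF (h ▸ hj₀)
    have hst : s ≠ t₀ := fun h => hsF (h ▸ ht₀F)
    rcases lt_or_gt_of_ne hst with hlt | hgt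
    · -- s < t₀ : use sSup
      set S : Set ℝ := F j₀ ∩ Icc s t₀ with hSdef
      have hSne : S.Nonempty := ⟨s, hj₀, le_refl s, le_of_lt hlt⟩
      have hSc : IsClosed S := (hclosed j₀).inter isClosed_Icc
      have hSb : BddAbove S := ⟨t₀, fun p hp => hp.2.2⟩
      have hm := hSc.csSup_mem hSne hSb
      set m : ℝ := sSup S with hmdef
      have hmF : m ∈ F j₀ := hm.1
      have hmt : m < t₀ := lt_of_le_of_ne hm.2.2
        (fun h => hji (huniq t₀ j₀ i₀ (h ▸ hmF) ht₀F))
      have hmK : m ∈ K := by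
        simp only [hKdef, mem_compl_iff, mem_iUnion, not_exists]
        intro k hk
        have hkj : k = j₀ := huniq m k j₀ (interior_subset hk) hmF
        rw [hkj] at hk
        obtain ⟨ε', hε', hb⟩ := Metric.mem_nhds_iff.mp (mem_interior_iff_mem_nhds.mp hk)
        set p : ℝ := min t₀ (m + ε' / 2) with hpdef
        have hmp : m < p := lt_min hmt (by linarith)
        have hpF : p ∈ F j₀ := hb (by
          rw [Metric.mem_ball, Real.dist_eq, abs_of_pos (by linarith)]
          have : p ≤ m + ε' / 2 := min_le_right _ _
          linarith)
        have hpS : p ∈ S := ⟨hpF, le_trans hm.2.1 (le_of_lt hmp), min_le_left _ _⟩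
        exact absurd (le_csSup hSb hpS) (not_le.mpr hmp)
      have hmd : dist m t₀ < ε := by
        rw [Real.dist_eq] at hsd ⊢
        rw [abs_of_neg (by linarith)]
        have h1 : s - t₀ ≤ m - t₀ := by linarith [hm.2.1]
        have h2 : -(s - t₀) ≤ |s - t₀| := neg_le_abs _
        linarith
      exact hji (huniq m j₀ i₀ hmF (hball m hmK hmd))
    · -- t₀ < s : use sInf
      set S : Set ℝ := F j₀ ∩ Icc t₀ s with hSdef
      have hSne : S.Nonempty := ⟨s, hj₀, le_of_lt hgt, le_refl s⟩
      have hSc : IsClosed S := (hclosed j₀).inter isClosed_Icc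
      have hSb : BddBelow S := ⟨t₀, fun p hp => hp.2.1⟩
      have hm := hSc.csInf_mem hSne hSb
      set m : ℝ := sInf S with hmdef
      have hmF : m ∈ F j₀ := hm.1
      have hmt : t₀ < m := lt_of_le_of_ne hm.2.1
        (fun h => hji (huniq t₀ j₀ i₀ (h ▸ hmF) ht₀F))
      have hmK : m ∈ K := by
        simp only [hKdef, mem_compl_iff, mem_iUnion, not_exists]
        intro k hk
        have hkj : k = j₀ := huniq m k j₀ (interior_subset hk) hmF
        rw [hkj] at hk
        obtain ⟨ε', hε', hb⟩ := Metric.mem_nhds_iff.mp (mem_interior_iff_mem_nhds.mp hk)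
        set p : ℝ := max t₀ (m - ε' / 2) with hpdef
        have hmp : p < m := max_lt hmt (by linarith)
        have hpF : p ∈ F j₀ := hb (by
          rw [Metric.mem_ball, Real.dist_eq, abs_of_neg (by linarith)]
          have : m - ε' / 2 ≤ p := le_max_right _ _
          linarith)
        have hpS : p ∈ S := ⟨hpF, le_max_left _ _, le_trans (le_of_lt hmp) hm.2.2⟩
        exact absurd (csInf_le hSb hpS) (not_le.mpr hmp)
      have hmd : dist m t₀ < ε := by
        rw [Real.dist_eq] at hsd ⊢
        rw [abs_of_pos (by linarith)]
        have h1 : m - t₀ ≤ s - t₀ := by linarith [hm.2.2]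
        have h2 : s - t₀ ≤ |s - t₀| := le_abs_self _
        linarith
      exact hji (huniq m j₀ i₀ hmF (hball m hmK hmd))
  -- now every point is in the interior of its own set; the index is locally constant
  have hUniv : ∀ t : ℝ, ∃ k, t ∈ interior (F k) := by
    intro t
    have : t ∉ K := by rw [hK]; exact notMem_empty t
    simpa [hKdef] using this
  set f : ℝ → ι := fun t => (hcover t).choose with hfdef
  have hfF : ∀ t, t ∈ F (f t) := fun t => (hcover t).choose_spec
  have hlc : IsLocallyConstant f := by
    rw [IsLocallyConstant.iff_exists_open]
    intro t
    obtain ⟨k, hk⟩ := hUniv t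
    have hkf : k = f t := huniq t k (f t) (interior_subset hk) (hfF t)
    refine ⟨interior (F k), isOpen_interior, hk, fun y hy => ?_⟩
    exact (huniq y (f y) k (hfF y) (interior_subset hy)).trans hkf
  have hxy : f x = f y := hlc.apply_eq_of_preconnectedSpace x y
  have h1 : i = f x := huniq x i (f x) hx (hfF x)
  have h2 : j = f y := huniq y j (f y) hy (hfF y)
  rw [h1, h2, hxy]

/-- A space charted on a real normed space is locally path-connected. -/
private lemma chartedSpace_locPathConnected {n : ℕ} {V : Type*} [TopologicalSpace V]
    [ChartedSpace (EuclideanSpace ℝ (Fin n)) V] : LocPathConnectedSpace V := by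
  constructor
  intro x
  rw [Filter.hasBasis_self]
  intro s hs
  set e := chartAt (EuclideanSpace ℝ (Fin n)) x with he
  have hx : x ∈ e.source := mem_chart_source _ x
  have h1 : e '' (s ∩ e.source) ∈ 𝓝 (e x) :=
    e.image_mem_nhds hx (inter_mem hs (e.open_source.mem_nhds hx))
  have h2 : e '' (s ∩ e.source) ∩ e.target ∈ 𝓝 (e x) :=
    inter_mem h1 (e.open_target.mem_nhds (e.map_source hx))
  obtain ⟨tt, ⟨ht_open, hxt, ht_pc⟩, hts⟩ := (isOpen_isPathConnected_basis (e x)).mem_iff.mp h2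
  have htt : tt ⊆ e.target := hts.trans inter_subset_right
  refine ⟨e.symm '' tt, ?_, ?_, ?_⟩
  · rw [e.symm_image_eq_source_inter_preimage htt]
    exact (e.isOpen_inter_preimage ht_open).mem_nhds ⟨hx, by simpa using hxt⟩
  · exact ht_pc.image' (e.continuousOn_symm.mono htt)
  · rintro v ⟨w, hwt, rfl⟩
    obtain ⟨u, hu, rfl⟩ := (hts hwt).1
    rw [e.left_inv hu.2]
    exact hu.1

/-- The "orange lemma": two lifts of a diffeomorphism of models differ by a
unique element of the acting discrete (countable) group. -/
theorem orange_lemma {n : ℕ} {Δ : Type*} [Group Δ] [Countable Δ]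
    {V : Type*} [TopologicalSpace V] [T2Space V]
    [ChartedSpace (EuclideanSpace ℝ (Fin n)) V]
    [Nonempty V] [ConnectedSpace V]
    [MulAction Δ V] [ContinuousConstSMul Δ V]
    (hV₀open : IsOpen {v : V | MulAction.stabilizer Δ v = ⊥})
    (hV₀conn : IsConnected {v : V | MulAction.stabilizer Δ v = ⊥})
    (hV₀dense : Dense {v : V | MulAction.stabilizer Δ v = ⊥})
    {U : Type*} [TopologicalSpace U]
    (ftilde : U ≃ₜ V) (fbar : U → V) (hfbar : Continuous fbar)
    (hlift : ∀ u : U, ∃ δ : Δ, fbar u = δ • ftilde u) :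
    ∃! δ : Δ, ∀ u : U, fbar u = δ • ftilde u := by
  classical
  set V₀ : Set V := {v : V | MulAction.stabilizer Δ v = ⊥} with hV₀def
  haveI : LocallyPathConnectedSpace V := chartedSpace_locPathConnected (n := n)
  set g : V → V := fun v => fbar (ftilde.symm v) with hgdef
  have hgc : Continuous g := hfbar.comp ftilde.symm.continuous
  have hglift : ∀ v : V, ∃ δ : Δ, g v = δ • v := by
    intro v
    obtain ⟨δ, hδ⟩ := hlift (ftilde.symm v)
    exact ⟨δ, by simpa using hδ⟩
  have hstab : ∀ v ∈ V₀, ∀ δ δ' : Δ, δ • v = δ' • v → δ = δ' := by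
    intro v hv δ δ' h
    have hmem : δ'⁻¹ * δ ∈ MulAction.stabilizer Δ v := by
      rw [MulAction.mem_stabilizer_iff, mul_smul, h, inv_smul_smul]
    rw [show MulAction.stabilizer Δ v = ⊥ from hv] at hmem
    have := Subgroup.mem_bot.mp hmem
    calc δ = δ' * (δ'⁻¹ * δ) := by group
    _ = δ' := by rw [this, mul_one]
  have hpc : IsPathConnected V₀ := hV₀open.isConnected_iff_isPathConnected.mp hV₀conn
  obtain ⟨v₀, hv₀⟩ := hV₀conn.nonempty
  obtain ⟨δ₀, hδ₀⟩ := hglift v₀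
  have key : ∀ v ∈ V₀, g v = δ₀ • v := by
    intro v hv
    obtain ⟨δ, hδ⟩ := hglift v
    suffices h : δ = δ₀ by rw [← h]; exact hδ
    obtain ⟨γ, hγ⟩ := hpc.joinedIn v₀ hv₀ v hv
    have hcc : Continuous γ.extend := γ.continuous_extend
    have hcV₀ : ∀ t : ℝ, γ.extend t ∈ V₀ := by
      intro t
      rw [Path.extend, ContinuousMap.coe_mk, Set.IccExtend_apply]
      exact hγ _
    set F : Δ → Set ℝ := fun δ' => {t : ℝ | g (γ.extend t) = δ' • (γ.extend t)} with hFdef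
    have hFc : ∀ δ', IsClosed (F δ') :=
      fun δ' => isClosed_eq (hgc.comp hcc) ((continuous_const_smul δ').comp hcc)
    have hFu : ∀ (t : ℝ) (k l : Δ), t ∈ F k → t ∈ F l → k = l := by
      intro t k l hk hl
      exact hstab (γ.extend t) (hcV₀ t) k l (hk.symm.trans hl)
    have hFcov : ∀ t : ℝ, ∃ δ', t ∈ F δ' := fun t => hglift (γ.extend t)
    have h1 : (1 : ℝ) ∈ F δ := by
      show g (γ.extend 1) = δ • γ.extend 1
      rw [γ.extend_one]
      exact hδ
    have h0 : (0 : ℝ) ∈ F δ₀ := by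
      show g (γ.extend 0) = δ₀ • γ.extend 0
      rw [γ.extend_zero]
      exact hδ₀
    exact closed_partition_real_const hFc hFu hFcov h1 h0
  have hall : ∀ v : V, g v = δ₀ • v := by
    have hc : IsClosed {v : V | g v = δ₀ • v} := isClosed_eq hgc (continuous_const_smul δ₀)
    intro v
    have hsub : closure V₀ ⊆ {v : V | g v = δ₀ • v} := closure_minimal key hc
    exact hsub (hV₀dense v)
  refine ⟨δ₀, fun u => ?_, fun δ' hδ' => ?_⟩
  · have := hall (ftilde u)
    simpa [hgdef] using this
  · have h1 : fbar (ftilde.symm v₀) = δ' • v₀ := by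
      have := hδ' (ftilde.symm v₀)
      simpa using this
    have h2 : fbar (ftilde.symm v₀) = δ₀ • v₀ := hall v₀
    exact hstab v₀ hv₀ δ' δ₀ (h1 ▸ h2)
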